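/- For every integer n ≥ 1, let g_n := (uv−1)^{n−1}·(u³v⁴ + u − 4uv + 2) ∈ ℂ[u,v]. Then g_n ∈ J_n; the exponents (n+2, n+3) and (n, n−1) both lie in the monomial support of g_n; (n+2, n+3) is the ≺-leading exponent of g_n, it has coefficient 1 in g_n, and it belongs to P_n; and every exponent in the support of g_n other than (n+2, n+3) lies in D_n. -/
import Mathlib


set_option synthInstance.maxHeartbeats 1000000
set_option maxHeartbeats 1000000

open Pointwise MvPolynomial

/-- The polynomial ring `ℂ[u,v]`. -/
abbrev CuvPoly : Type := MvPolynomial (Fin 2) ℂ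

/-- The variable `u`. -/
noncomputable def uP : CuvPoly := X 0

/-- The variable `v`. -/
noncomputable def vP : CuvPoly := X 1

/-- `S`, the `ℂ`-subalgebra of `ℂ[u,v]` generated by `u`, `u³v⁴` and `uv`. -/
noncomputable def Ssub : Subalgebra ℂ CuvPoly :=
  Algebra.adjoin ℂ {uP, uP ^ 3 * vP ^ 4, uP * vP}

/-- `u` as an element of `S`. -/
noncomputable def U : Ssub := ⟨uP, Algebra.subset_adjoin (by simp)⟩

/-- `u³v⁴` as an element of `S`. -/
noncomputable def Y : Ssub := ⟨uP ^ 3 * vP ^ 4, Algebra.subset_adjoin (by simp)⟩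

/-- `uv` as an element of `S`. -/
noncomputable def UV : Ssub := ⟨uP * vP, Algebra.subset_adjoin (by simp)⟩

/-- The ideal `I = ⟨u−1, u³v⁴−1, uv−1⟩` of `S`. -/
noncomputable def Iid : Ideal Ssub := Ideal.span {U - 1, Y - 1, UV - 1}

/-- The ideal `J_n = I^{n+1}` of `S`. -/
noncomputable def Jid (n : ℕ) : Ideal Ssub := Iid ^ (n + 1)

/-- The monomial ordering `≺` on exponents in `ℤ²`, associated to the matrix with rows
`(2,-1)` and `(1,1)`: `β ≺ α` iff `2β₁−β₂ < 2α₁−α₂`, or `2β₁−β₂ = 2α₁−α₂` and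
`β₁+β₂ < α₁+α₂`. -/
def precLt (b a : ℤ × ℤ) : Prop :=
  2 * b.1 - b.2 < 2 * a.1 - a.2 ∨
    (2 * b.1 - b.2 = 2 * a.1 - a.2 ∧ b.1 + b.2 < a.1 + a.2)

/-- The monomial support of `f ∈ ℂ[u,v]`, as a finite set of points of `ℤ²`. -/
noncomputable def suppZ (f : CuvPoly) : Finset (ℤ × ℤ) :=
  f.support.image (fun m => ((m 0 : ℤ), (m 1 : ℤ)))

/-- `α` is the `≺`-leading exponent of `f`: it lies in the support of `f` and is
`≺`-greater than every other exponent in the support. -/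
def IsLeadExp (f : CuvPoly) (α : ℤ × ℤ) : Prop :=
  α ∈ suppZ f ∧ ∀ β ∈ suppZ f, β ≠ α → precLt β α

/-- The coefficient of the monomial `u^{α₁} v^{α₂}` in `f`. -/
noncomputable def coeffAt (f : CuvPoly) (α : ℤ × ℤ) : ℂ :=
  MvPolynomial.coeff (Finsupp.single 0 α.1.toNat + Finsupp.single 1 α.2.toNat) f

/-- The submonoid `σ_Z ⊂ ℤ²` of pairs `(a,b)` with `0 ≤ b` and `3b ≤ 4a`. -/
def sigmaZ : Set (ℤ × ℤ) := {a : ℤ × ℤ | 0 ≤ a.2 ∧ 3 * a.2 ≤ 4 * a.1}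

/-- The point `p_n`. -/
def pPt (n : ℤ) : ℤ × ℤ := if Odd n then ((n + 3) / 2, 0) else (n / 2 + 1, 0)

/-- The point `s_n`. -/
def sPt (n : ℤ) : ℤ × ℤ :=
  if Odd n then (3 * (n + 1) / 2, 2 * (n + 1)) else (3 * (n + 2) / 2, 2 * (n + 2))

/-- The point `q^i = (n+1-i, n-2i)`. -/
def qPt (n i : ℤ) : ℤ × ℤ := (n + 1 - i, n - 2 * i)

/-- The point `r^j = (n+1+j, n+1+2j)`. -/
def rPt (n j : ℤ) : ℤ × ℤ := (n + 1 + j, n + 1 + 2 * j)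

/-- The set `P_n ⊂ ℤ²`. -/
def Pset (n : ℤ) : Set (ℤ × ℤ) :=
  {pPt n, sPt n}
    ∪ {x | ∃ i : ℤ, 0 ≤ i ∧ i ≤ (if Odd n then (n - 1) / 2 else (n - 2) / 2) ∧ x = qPt n i}
    ∪ {x | ∃ j : ℤ, 0 ≤ j ∧ j ≤ (if Odd n then (n - 1) / 2 else n / 2) ∧ x = rPt n j}

/-- The set `D_n = σ_Z \ (P_n + σ_Z)`, where `+` is pointwise addition of sets. -/
def Dset (n : ℤ) : Set (ℤ × ℤ) := sigmaZ \ (Pset n + sigmaZ)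

/-- `g_n = (uv−1)^{n−1} · (u³v⁴ + u − 4uv + 2)` as an element of `S`. -/
noncomputable def Gn (n : ℕ) : Ssub := (UV - 1) ^ (n - 1) * (Y + U - 4 * UV + 2)


/-! ### Auxiliary machinery -/

noncomputable def HH : CuvPoly := uP^3*vP^4 + uP - 4*(uP*vP) + 2
noncomputable def ee (a b : ℕ) : Fin 2 →₀ ℕ := Finsupp.single 0 a + Finsupp.single 1 b
noncomputable def cc (n k : ℕ) : ℂ := (-1)^(k+(n-1)) * ((n-1).choose k)

lemma coe4 : ((4:Ssub):CuvPoly) = 4 := by norm_cast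
lemma coe2 : ((2:Ssub):CuvPoly) = 2 := by norm_cast
lemma coe6 : ((6:Ssub):CuvPoly) = 6 := by norm_cast

lemma keyid : (Y + U - 4*UV + 2 : Ssub)
    = 6*(UV-1)^2 + 4*(UV-1)^3 + (UV-1)^4 - (U-1)*(Y-1) := by
  apply Subtype.ext
  push_cast
  simp only [U, Y, UV, coe4, coe2, coe6]
  ring

lemma Gn_coe (n : ℕ) : ((Gn n : Ssub) : CuvPoly) = (uP*vP - 1)^(n-1) * HH := by
  simp only [Gn, HH]
  push_cast
  simp only [U, Y, UV, coe4, coe2, coe6]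

lemma Gn_mem (n : ℕ) (hn : 1 ≤ n) : Gn n ∈ Jid n := by
  have hUV : (UV - 1 : Ssub) ∈ Iid := Ideal.subset_span (by simp)
  have hU : (U - 1 : Ssub) ∈ Iid := Ideal.subset_span (by simp)
  have hY : (Y - 1 : Ssub) ∈ Iid := Ideal.subset_span (by simp)
  have hsq : ((UV-1)^2 : Ssub) ∈ Iid^2 := Ideal.pow_mem_pow hUV 2
  have h2 : (6*(UV-1)^2 + 4*(UV-1)^3 + (UV-1)^4 - (U-1)*(Y-1) : Ssub) ∈ Iid^2 := by
    refine sub_mem (add_mem (add_mem ?_ ?_) ?_) ?_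
    · exact Ideal.mul_mem_left _ _ hsq
    · rw [show (4*(UV-1)^3 : Ssub) = (4*(UV-1)) * (UV-1)^2 by ring]
      exact Ideal.mul_mem_left _ _ hsq
    · rw [show ((UV-1)^4 : Ssub) = (UV-1)^2*(UV-1)^2 by ring]
      exact Ideal.mul_mem_left _ _ hsq
    · rw [pow_two]; exact Ideal.mul_mem_mul hU hY
  rw [Gn, keyid, Jid, show n + 1 = (n-1) + 2 by omega, pow_add]
  exact Ideal.mul_mem_mul (Ideal.pow_mem_pow hUV (n-1)) h2

lemma ee_apply0 (a b : ℕ) : ee a b 0 = a := by simp [ee]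
lemma ee_apply1 (a b : ℕ) : ee a b 1 = b := by simp [ee, Finsupp.single_apply]

lemma eq_ee (m : Fin 2 →₀ ℕ) : m = ee (m 0) (m 1) := by
  ext i
  fin_cases i
  · simp [ee]
  · simp [ee, Finsupp.single_apply]

lemma ee_inj {a b c d : ℕ} (h : ee a b = ee c d) : a = c ∧ b = d := by
  constructor
  · have := congrArg (fun f => f 0) h; simpa [ee] using this
  · have := congrArg (fun f => f 1) h; simpa [ee, Finsupp.single_apply] using this

lemma mono_eq (a b : ℕ) : uP ^ a * vP ^ b = monomial (ee a b) (1 : ℂ) := by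
  rw [uP, vP, X_pow_eq_monomial, X_pow_eq_monomial, monomial_mul, one_mul, ee]

lemma coeff_uv (a b c d : ℕ) :
    coeff (ee a b) (uP ^ c * vP ^ d) = if c = a ∧ d = b then (1:ℂ) else 0 := by
  rw [mono_eq, coeff_monomial]
  by_cases h : c = a ∧ d = b
  · rw [if_pos h, if_pos]; rw [h.1, h.2]
  · rw [if_neg h, if_neg]; intro he; exact h (ee_inj he)

lemma expand (n : ℕ) (hn : 1 ≤ n) :
    (uP*vP - 1)^(n-1) * HH = ∑ k ∈ Finset.range n, C (cc n k) *
      (uP^(k+3)*vP^(k+4) + uP^(k+1)*vP^k - C 4*(uP^(k+1)*vP^(k+1)) + C 2*(uP^k*vP^k)) := by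
  rw [sub_pow, Nat.sub_add_cancel hn, Finset.sum_mul]
  refine Finset.sum_congr rfl fun k hk => ?_
  simp only [cc, map_mul, map_pow, map_neg, map_one, map_natCast, HH, map_ofNat, one_pow]
  ring

lemma coeffg (n : ℕ) (hn : 1 ≤ n) (a b : ℕ) :
    coeff (ee a b) ((uP*vP - 1)^(n-1) * HH) = ∑ k ∈ Finset.range n, cc n k *
      ((if k+3 = a ∧ k+4 = b then 1 else 0) + (if k+1 = a ∧ k = b then 1 else 0)
        - 4*(if k+1 = a ∧ k+1 = b then 1 else 0) + 2*(if k = a ∧ k = b then 1 else 0)) := by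
  rw [expand n hn, coeff_sum]
  refine Finset.sum_congr rfl fun k hk => ?_
  rw [coeff_C_mul, coeff_add, coeff_sub, coeff_add, coeff_C_mul, coeff_C_mul,
    coeff_uv, coeff_uv, coeff_uv, coeff_uv]

lemma cc_top (n : ℕ) : cc n (n-1) = 1 := by
  have h1 : ((-1:ℂ))^((n-1)+(n-1)) = 1 := Even.neg_one_pow ⟨n-1, rfl⟩
  simp [cc, h1]

lemma coeff_lead (n : ℕ) (hn : 1 ≤ n) :
    coeff (ee (n+2) (n+3)) ((uP*vP - 1)^(n-1) * HH) = 1 := by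
  rw [coeffg n hn]
  rw [Finset.sum_eq_single (n-1)]
  · rw [if_pos (by omega), if_neg (by omega), if_neg (by omega), if_neg (by omega), cc_top]
    ring
  · intro k hk hkne
    rw [Finset.mem_range] at hk
    rw [if_neg (by omega), if_neg (by omega), if_neg (by omega), if_neg (by omega)]
    ring
  · intro h; exact absurd (Finset.mem_range.2 (by omega)) h

lemma coeff_second (n : ℕ) (hn : 1 ≤ n) :
    coeff (ee n (n-1)) ((uP*vP - 1)^(n-1) * HH) = 1 := by
  rw [coeffg n hn]
  rw [Finset.sum_eq_single (n-1)]
  · rw [if_neg (by omega), if_pos (by omega), if_neg (by omega), if_neg (by omega), cc_top]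
    ring
  · intro k hk hkne
    rw [Finset.mem_range] at hk
    rw [if_neg (by omega), if_neg (by omega), if_neg (by omega), if_neg (by omega)]
    ring
  · intro h; exact absurd (Finset.mem_range.2 (by omega)) h

lemma supp_shape (n : ℕ) (hn : 1 ≤ n) (a b : ℕ)
    (h : coeff (ee a b) ((uP*vP - 1)^(n-1) * HH) ≠ 0) :
    ∃ k : ℕ, k < n ∧ ((a = k+3 ∧ b = k+4) ∨ (a = k+1 ∧ b = k) ∨
      (a = k+1 ∧ b = k+1) ∨ (a = k ∧ b = k)) := by
  by_contra hc
  push_neg at hc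
  apply h
  rw [coeffg n hn]
  refine Finset.sum_eq_zero fun k hk => ?_
  rw [Finset.mem_range] at hk
  have := hc k hk
  rw [if_neg (by omega), if_neg (by omega), if_neg (by omega), if_neg (by omega)]
  ring

lemma mem_suppZ_iff (f : CuvPoly) (a b : ℕ) :
    ((a:ℤ),(b:ℤ)) ∈ suppZ f ↔ coeff (ee a b) f ≠ 0 := by
  constructor
  · intro h
    rw [suppZ, Finset.mem_image] at h
    obtain ⟨m, hm, hme⟩ := h
    have h0 : m 0 = a := by
      have := congrArg Prod.fst hme; simp only [] at this; exact_mod_cast this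
    have h1 : m 1 = b := by
      have := congrArg Prod.snd hme; simp only [] at this; exact_mod_cast this
    rw [mem_support_iff] at hm
    rwa [← h0, ← h1, ← eq_ee m]
  · intro h
    rw [suppZ, Finset.mem_image]
    exact ⟨ee a b, mem_support_iff.2 h, by simp [ee_apply0, ee_apply1]⟩

lemma suppZ_shape {f : CuvPoly} {β : ℤ × ℤ} (h : β ∈ suppZ f) :
    ∃ a b : ℕ, β = ((a:ℤ),(b:ℤ)) ∧ coeff (ee a b) f ≠ 0 := by
  rw [suppZ, Finset.mem_image] at h
  obtain ⟨m, hm, hme⟩ := h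
  refine ⟨m 0, m 1, hme.symm, ?_⟩
  rw [← eq_ee m]
  exact mem_support_iff.1 hm

lemma not_mem_Padd (n : ℤ) (hn : 1 ≤ n) (β : ℤ × ℤ)
    (h2 : 4*β.1 - 3*β.2 ≤ n+3) (h3 : β.2 ≤ n+2)
    (h4 : β.2 + (4*β.1 - 3*β.2) ≤ 2*n+1 ∨ β.2 ≤ n) :
    β ∉ Pset n + sigmaZ := by
  intro hmem
  rw [Set.mem_add] at hmem
  obtain ⟨p, hp, s, hs, hps⟩ := hmem
  obtain ⟨hs1, hs2⟩ := hs
  have he1 : p.1 + s.1 = β.1 := congrArg Prod.fst hps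
  have he2 : p.2 + s.2 = β.2 := congrArg Prod.snd hps
  simp only [Pset, Set.mem_union, Set.mem_insert_iff, Set.mem_singleton_iff,
    Set.mem_setOf_eq] at hp
  rcases hp with ((hp | hp) | ⟨i, hi0, _, hp⟩) | ⟨j, hj0, _, hp⟩
  · rcases Int.even_or_odd n with he | ho
    · have hno : ¬ Odd n := by simp [Int.not_odd_iff_even.mpr he]
      rw [pPt, if_neg hno] at hp
      have h1 : p.1 = n/2 + 1 := by rw [hp]
      have h2' : p.2 = 0 := by rw [hp]
      have := Int.even_iff.mp he
      omega
    · rw [pPt, if_pos ho] at hp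
      have h1 : p.1 = (n+3)/2 := by rw [hp]
      have h2' : p.2 = 0 := by rw [hp]
      have := Int.odd_iff.mp ho
      omega
  · rcases Int.even_or_odd n with he | ho
    · have hno : ¬ Odd n := by simp [Int.not_odd_iff_even.mpr he]
      rw [sPt, if_neg hno] at hp
      have h2' : p.2 = 2*(n+2) := by rw [hp]
      omega
    · rw [sPt, if_pos ho] at hp
      have h2' : p.2 = 2*(n+1) := by rw [hp]
      omega
  · have h1 : p.1 = n + 1 - i := by rw [hp]; rfl
    have h2' : p.2 = n - 2*i := by rw [hp]; rfl
    omega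
  · have h1 : p.1 = n + 1 + j := by rw [hp]; rfl
    have h2' : p.2 = n + 1 + 2*j := by rw [hp]; rfl
    omega

lemma lead_mem_Pset (n : ℤ) (hn : 1 ≤ n) : ((n+2 : ℤ), (n+3 : ℤ)) ∈ Pset n := by
  rcases eq_or_lt_of_le hn with h1 | h2
  · left; left; right
    rw [← h1]
    decide
  · right
    refine ⟨1, by omega, ?_, by simp [rPt, Prod.ext_iff]; omega⟩
    rcases Int.even_or_odd n with he | ho
    · have hno : ¬ Odd n := by simp [Int.not_odd_iff_even.mpr he]
      rw [if_neg hno]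
      have := Int.even_iff.mp he
      omega
    · rw [if_pos ho]
      have := Int.odd_iff.mp ho
      omega

/-- for every integer `n ≥ 1`, `g_n := (uv−1)^{n−1}(u³v⁴ + u − 4uv + 2)`
lies in `J_n`; the exponents `(n+2, n+3)` and `(n, n−1)` lie in the support of `g_n`;
`(n+2, n+3)` is the `≺`-leading exponent of `g_n`, with coefficient `1`, and lies in `P_n`;
and every other exponent in the support of `g_n` lies in `D_n`. -/
theorem Gn_leading_data (n : ℕ) (hn : 1 ≤ n) :
    Gn n ∈ Jid n ∧
    ((n : ℤ) + 2, (n : ℤ) + 3) ∈ suppZ (Gn n : CuvPoly) ∧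
    ((n : ℤ), (n : ℤ) - 1) ∈ suppZ (Gn n : CuvPoly) ∧
    IsLeadExp (Gn n : CuvPoly) ((n : ℤ) + 2, (n : ℤ) + 3) ∧
    coeffAt (Gn n : CuvPoly) ((n : ℤ) + 2, (n : ℤ) + 3) = 1 ∧
    ((n : ℤ) + 2, (n : ℤ) + 3) ∈ Pset (n : ℤ) ∧
    ∀ β ∈ suppZ (Gn n : CuvPoly), β ≠ ((n : ℤ) + 2, (n : ℤ) + 3) → β ∈ Dset (n : ℤ) := by
  have hgc := Gn_coe n
  have hlead : ((n : ℤ) + 2, (n : ℤ) + 3) ∈ suppZ (Gn n : CuvPoly) := by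
    have hcast : (((n+2 : ℕ) : ℤ), ((n+3 : ℕ) : ℤ)) = ((n : ℤ) + 2, (n : ℤ) + 3) := by
      push_cast; rfl
    rw [← hcast, mem_suppZ_iff, hgc, coeff_lead n hn]
    exact one_ne_zero
  have hshape : ∀ β ∈ suppZ (Gn n : CuvPoly), ∃ a b k : ℕ, β = ((a:ℤ),(b:ℤ)) ∧ k < n ∧
      ((a = k+3 ∧ b = k+4) ∨ (a = k+1 ∧ b = k) ∨ (a = k+1 ∧ b = k+1) ∨ (a = k ∧ b = k)) := by
    intro β hβ
    rw [hgc] at hβ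
    obtain ⟨a, b, hab, hcoef⟩ := suppZ_shape hβ
    obtain ⟨k, hk, hcase⟩ := supp_shape n hn a b hcoef
    exact ⟨a, b, k, hab, hk, hcase⟩
  refine ⟨Gn_mem n hn, hlead, ?_, ⟨hlead, ?_⟩, ?_, ?_, ?_⟩
  · -- (n, n-1) in support
    have hcast : (((n : ℕ) : ℤ), ((n-1 : ℕ) : ℤ)) = ((n : ℤ), (n : ℤ) - 1) := by
      rw [Nat.cast_sub hn]; push_cast; rfl
    rw [← hcast, mem_suppZ_iff, hgc, coeff_second n hn]
    exact one_ne_zero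
  · -- leading exponent
    intro β hβ hne
    obtain ⟨a, b, k, rfl, hk, hcase⟩ := hshape β hβ
    have hne' : ¬((a:ℤ) = (n:ℤ)+2 ∧ (b:ℤ) = (n:ℤ)+3) := by
      intro h
      exact hne (Prod.ext_iff.mpr ⟨h.1, h.2⟩)
    simp only [precLt]
    rcases hcase with ⟨rfl, rfl⟩ | ⟨rfl, rfl⟩ | ⟨rfl, rfl⟩ | ⟨rfl, rfl⟩ <;> omega
  · -- coefficient 1
    have h1 : ((n : ℤ) + 2).toNat = n + 2 := by omega
    have h2 : ((n : ℤ) + 3).toNat = n + 3 := by omega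
    show coeff _ _ = 1
    rw [show (Finsupp.single 0 ((n : ℤ) + 2, (n : ℤ) + 3).1.toNat +
        Finsupp.single 1 ((n : ℤ) + 2, (n : ℤ) + 3).2.toNat) = ee (n+2) (n+3) by
      simp only [ee, h1, h2]]
    rw [hgc]
    exact coeff_lead n hn
  · -- in Pset
    exact lead_mem_Pset (n : ℤ) (by exact_mod_cast hn)
  · -- in Dset
    intro β hβ hne
    obtain ⟨a, b, k, rfl, hk, hcase⟩ := hshape β hβ
    have hne' : ¬((a:ℤ) = (n:ℤ)+2 ∧ (b:ℤ) = (n:ℤ)+3) := by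
      intro h
      exact hne (Prod.ext_iff.mpr ⟨h.1, h.2⟩)
    constructor
    · simp only [sigmaZ, Set.mem_setOf_eq]
      rcases hcase with ⟨rfl, rfl⟩ | ⟨rfl, rfl⟩ | ⟨rfl, rfl⟩ | ⟨rfl, rfl⟩ <;>
        (constructor <;> push_cast <;> omega)
    · refine not_mem_Padd (n:ℤ) (by exact_mod_cast hn) _ ?_ ?_ ?_ <;>
        (rcases hcase with ⟨rfl, rfl⟩ | ⟨rfl, rfl⟩ | ⟨rfl, rfl⟩ | ⟨rfl, rfl⟩ <;>
          (push_cast at hne' ⊢; omega))
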